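/- arXiv:math/0307241 — 2 statements merged into one kernel-verified Lean document; each statement's English description precedes it below -/
import Mathlib

section
/- Let Δ be a 1-dimensional forest (a simple graph with no cycles) with edge ideal I ⊂ R = K[x_1,...,x_n], and let edges {x_{i_1}, x_{j_1}}, ..., {x_{i_m}, x_{j_m}} of Δ be given. Then the product of Koszul homology classes [x_{i_1} e_{j_1}] ⋯ [x_{i_m} e_{j_m}] is nonzero in H_•(R/I) if and only if the edges {x_{i_1}, x_{j_1}}, ..., {x_{i_m}, x_{j_m}} are pairwise disconnected. -/
noncomputable def kd (K : Type) [Field K] (N : ℕ) (M : Type) [AddCommGroup M]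
    [Module (MvPolynomial (Fin N) K) M] :
    (Finset (Fin N) → M) →ₗ[MvPolynomial (Fin N) K] (Finset (Fin N) → M) where
  toFun z s := ∑ j ∈ sᶜ, ((-1 : ℤ) ^ ((s.filter (· < j)).card)) •
      ((MvPolynomial.X j : MvPolynomial (Fin N) K) • z (insert j s))
  map_add' x y := by
    funext s
    try dsimp only
    simp only [Pi.add_apply, smul_add, Finset.sum_add_distrib]
  map_smul' r x := by
    funext s
    try dsimp only
    simp only [Pi.smul_apply, RingHom.id_apply, Finset.smul_sum]
    exact Finset.sum_congr rfl fun j _ => by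
      rw [smul_comm r ((-1 : ℤ) ^ ((s.filter (· < j)).card)), smul_comm r (MvPolynomial.X j : MvPolynomial (Fin N) K)]

noncomputable def ZB (K : Type) [Field K] (N : ℕ) (M : Type) [AddCommGroup M]
    [Module (MvPolynomial (Fin N) K) M] : Submodule (MvPolynomial (Fin N) K) (Finset (Fin N) → M) :=
  LinearMap.ker (kd K N M)

noncomputable def Bd (K : Type) [Field K] (N : ℕ) (M : Type) [AddCommGroup M]
    [Module (MvPolynomial (Fin N) K) M] : Submodule (MvPolynomial (Fin N) K) (Finset (Fin N) → M) :=
  LinearMap.range (kd K N M)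

@[reducible] def Hmod (K : Type) [Field K] (N : ℕ) (M : Type) [AddCommGroup M]
    [Module (MvPolynomial (Fin N) K) M] :=
  (ZB K N M) ⧸ (Submodule.comap (ZB K N M).subtype (Bd K N M))

open scoped Classical in
noncomputable def classOf (K : Type) [Field K] (N : ℕ) (M : Type) [AddCommGroup M]
    [Module (MvPolynomial (Fin N) K) M] (z : Finset (Fin N) → M) : Hmod K N M :=
  if h : z ∈ ZB K N M then Submodule.Quotient.mk ⟨z, h⟩ else 0


variable {V : Type} [DecidableEq V]

/-- A simplicial complex presented by its (finite) set of facets: the facets are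
nonempty and form an antichain under inclusion (facets are the maximal faces). -/
def IsComplex (Δ : Finset (Finset V)) : Prop :=
  (∀ F ∈ Δ, F.Nonempty) ∧ ∀ F ∈ Δ, ∀ G ∈ Δ, F ⊆ G → F = G

/-- `c 0, c 1, …, c n` is a chain of facets of `Δ`: consecutive members intersect
nontrivially. -/
def IsChainSeq (Δ : Finset (Finset V)) (c : ℕ → Finset V) (n : ℕ) : Prop :=
  (∀ i ≤ n, c i ∈ Δ) ∧ ∀ i < n, (c i ∩ c (i + 1)).Nonempty

/-- A proper chain: a chain with `dim (c i ∩ c (i+1)) = dim (c (i+1)) - 1` for all `i`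
(expressed via cardinalities), going from a facet of larger (or equal) dimension to one of
smaller dimension. -/
def IsProperChainSeq (Δ : Finset (Finset V)) (c : ℕ → Finset V) (n : ℕ) : Prop :=
  IsChainSeq Δ c n ∧ (c n).card ≤ (c 0).card ∧
    ∀ i < n, (c i ∩ c (i + 1)).card + 1 = (c (i + 1)).card

/-- An irredundant chain: no proper subsequence (with the same endpoints) is again a chain. -/
def IsIrredChainSeq (Δ : Finset (Finset V)) (c : ℕ → Finset V) (n : ℕ) : Prop :=
  IsChainSeq Δ c n ∧ ∀ m < n, ∀ g : ℕ → ℕ, StrictMonoOn g (Set.Iic m) →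
    g 0 = 0 → g m = n → ¬ IsChainSeq Δ (c ∘ g) m

/-- An irredundant proper chain: no proper subsequence (with the same endpoints) is again a
proper chain. -/
def IsIrredProperChainSeq (Δ : Finset (Finset V)) (c : ℕ → Finset V) (n : ℕ) : Prop :=
  IsProperChainSeq Δ c n ∧ ∀ m < n, ∀ g : ℕ → ℕ, StrictMonoOn g (Set.Iic m) →
    g 0 = 0 → g m = n → ¬ IsProperChainSeq Δ (c ∘ g) m

/-- `F` is a leaf of the complex with facet set `Δ`. -/
def IsLeaf (Δ : Finset (Finset V)) (F : Finset V) : Prop :=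
  F ∈ Δ ∧ (Δ = {F} ∨ ∃ G ∈ Δ, G ≠ F ∧ ∀ H ∈ Δ, H ≠ F → F ∩ H ⊆ F ∩ G)

/-- The complex is connected: any two facets are joined by a chain. -/
def ComplexConnected (Δ : Finset (Finset V)) : Prop :=
  ∀ F ∈ Δ, ∀ G ∈ Δ, ∃ n c, IsChainSeq Δ c n ∧ c 0 = F ∧ c n = G

/-- Every nonempty subcomplex has a leaf. -/
def HasLeafProp (Δ : Finset (Finset V)) : Prop :=
  ∀ Γ ⊆ Δ, Γ.Nonempty → ∃ F, IsLeaf Γ F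

/-- A tree: a (nonempty) connected complex all of whose nonempty subcomplexes have a leaf. -/
def IsTree (Δ : Finset (Finset V)) : Prop :=
  Δ.Nonempty ∧ ComplexConnected Δ ∧ HasLeafProp Δ

/-- A forest: every connected component is a tree; equivalently every nonempty subcomplex
has a leaf. -/
def IsForest (Δ : Finset (Finset V)) : Prop := HasLeafProp Δ

/-- Pure of dimension `d`: all facets have `d + 1` vertices. -/
def IsPure (Δ : Finset (Finset V)) (d : ℕ) : Prop := ∀ F ∈ Δ, F.card = d + 1

/-- Connected in codimension 1: any two facets (ordered by decreasing dimension) are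
joined by a proper chain. -/
def ConnCodim1 (Δ : Finset (Finset V)) : Prop :=
  ∀ F ∈ Δ, ∀ G ∈ Δ, G.card ≤ F.card →
    ∃ n c, IsProperChainSeq Δ c n ∧ c 0 = F ∧ c n = G

/-- The facets of the link of a face `G` of `Δ`. -/
def LinkFacets (Δ : Finset (Finset V)) (G : Finset V) : Finset (Finset V) :=
  (Δ.filter fun F => G ⊆ F).image fun F => F \ G

/-- Two edges of a graph `Δ` are disconnected: they share no vertex, and no vertex of one is
joined by an edge of `Δ` to a vertex of the other. -/
def Disconnected {V : Type} [DecidableEq V] (Δ : Finset (Finset V)) (E E₂ : Finset V) : Prop :=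
  E ∩ E₂ = ∅ ∧ ∀ a ∈ E, ∀ b ∈ E₂, ({a, b} : Finset V) ∉ Δ



open MvPolynomial Finset

noncomputable section StmtAux

variable {K : Type} [Field K] {N : ℕ}

/-- exponent finsupp of a squarefree monomial -/
def mexp (U : Finset (Fin N)) : Fin N →₀ ℕ := ∑ v ∈ U, Finsupp.single v 1

lemma mexp_apply (U : Finset (Fin N)) (w : Fin N) :
    mexp U w = if w ∈ U then 1 else 0 := by
  classical
  rw [mexp, Finsupp.finset_sum_apply]
  by_cases h : w ∈ U
  · rw [if_pos h, Finset.sum_eq_single w (fun v _ hv => Finsupp.single_eq_of_ne' hv)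
      (fun h' => absurd h h')]
    simp
  · rw [if_neg h, Finset.sum_eq_zero]
    intro v hv
    exact Finsupp.single_eq_of_ne' (fun hvw => h (hvw ▸ hv))

lemma mem_support_mexp (U : Finset (Fin N)) (w : Fin N) :
    w ∈ (mexp U).support ↔ w ∈ U := by
  rw [Finsupp.mem_support_iff, mexp_apply]
  by_cases h : w ∈ U <;> simp [h]

lemma mexp_insert {U : Finset (Fin N)} {v : Fin N} (hv : v ∉ U) :
    mexp (insert v U) = Finsupp.single v 1 + mexp U := by
  rw [mexp, Finset.sum_insert hv]; rfl

lemma mexp_sub_single {U : Finset (Fin N)} {v : Fin N} (hv : v ∈ U) :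
    mexp U - Finsupp.single v 1 = mexp (U.erase v) := by
  have h2 : mexp U = Finsupp.single v 1 + mexp (U.erase v) := by
    conv_lhs => rw [(Finset.insert_erase hv).symm]
    rw [mexp_insert (Finset.notMem_erase v U)]
  rw [h2]
  ext w
  rw [Finsupp.tsub_apply, Finsupp.add_apply]
  omega

lemma prod_X_eq_monomial (U : Finset (Fin N)) :
    (∏ v ∈ U, (X v : MvPolynomial (Fin N) K)) = monomial (mexp U) 1 := by
  classical
  induction U using Finset.induction_on with
  | empty => simp [mexp]
  | insert _ _ hv =>
    rename_i v U ih
    rw [Finset.prod_insert hv, ih, mexp_insert hv, X, monomial_mul, one_mul]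

/-- indicator flip in ZMod 2 -/
lemma neg_one_pow_add_eq_zero {x y : ℕ} (h : Odd (x + y)) :
    (-1 : K) ^ x + (-1 : K) ^ y = 0 := by
  rcases Nat.even_or_odd x with hx | hx
  · have hy : Odd y := by
      rcases Nat.even_or_odd y with hy | hy
      · exact absurd (hx.add hy) (by simpa using h)
      · exact hy
    rw [hx.neg_one_pow, hy.neg_one_pow]; ring
  · have hy : Even y := by
      rcases Nat.even_or_odd y with hy | hy
      · exact hy
      · exact absurd (hx.add_odd hy) (by simpa using h)
    rw [hx.neg_one_pow, hy.neg_one_pow]; ring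

end StmtAux

open Finset

section Comb

variable {N m : ℕ}

def cch (a b : Fin m → Fin N) (σ : Fin m → Bool) (k : Fin m) : Fin N :=
  if σ k then a k else b k

lemma cch_congr (a b : Fin m → Fin N) {σ τ : Fin m → Bool} {k : Fin m}
    (h : σ k = τ k) : cch a b σ k = cch a b τ k := by
  unfold cch; rw [h]

lemma cch_update_ne (a b : Fin m → Fin N) (σ : Fin m → Bool) {k l : Fin m} (v : Bool)
    (h : l ≠ k) : cch a b (Function.update σ k v) l = cch a b σ l :=
  cch_congr a b (Function.update_of_ne h v σ)

def invc (a b : Fin m → Fin N) (σ : Fin m → Bool) : ℕ :=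
  (Finset.univ.filter (fun pq : Fin m × Fin m =>
    pq.1 < pq.2 ∧ cch a b σ pq.2 < cch a b σ pq.1)).card

def Ecnt (a b : Fin m → Fin N) (σ : Fin m → Bool) (k : Fin m) : ℕ :=
  (Finset.univ.filter (fun l : Fin m =>
    cch a b σ l < cch a b (Function.update σ k (!σ k)) k)).card

lemma flip_ind {α : Type*} [LinearOrder α] {x y : α} (h : x ≠ y) :
    (if x < y then (1 : ZMod 2) else 0) + (if y < x then (1 : ZMod 2) else 0) = 1 := by
  rcases h.lt_or_gt with h' | h'
  · rw [if_pos h', if_neg (asymm h'), add_zero]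
  · rw [if_neg (asymm h'), if_pos h', zero_add]

lemma flip_swap {α : Type*} [LinearOrder α] {x y : α} (h : x ≠ y) :
    (if y < x then (1 : ZMod 2) else 0) = 1 + (if x < y then 1 else 0) := by
  rcases h.lt_or_gt with h' | h'
  · rw [if_neg (asymm h'), if_pos h']; decide
  · rw [if_pos h', if_neg (asymm h')]; decide

lemma zmod_add_self (x : ZMod 2) : x + x = 0 := by
  have h : (2 : ZMod 2) = 0 := by decide
  calc x + x = 2 * x := by ring
  _ = 0 := by rw [h, zero_mul]

lemma odd_of_zmod' {n : ℕ} (h : (n : ZMod 2) = 1) : Odd n := by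
  rw [Nat.odd_iff]
  rcases Nat.mod_two_eq_zero_or_one n with h2 | h2
  · exfalso
    have h3 := ZMod.natCast_mod n 2
    rw [h2] at h3
    rw [← h3] at h
    exact absurd h (by decide)
  · exact h2

lemma card_filter_zmod {α : Type*} [Fintype α] [DecidableEq α] (p : α → Prop) [DecidablePred p] :
    (((Finset.univ.filter p).card : ℕ) : ZMod 2) = ∑ x : α, if p x then (1 : ZMod 2) else 0 := by
  rw [Finset.card_filter]
  push_cast
  exact Finset.sum_congr rfl fun x _ => by split <;> simp

theorem parity_main (a b : Fin m → Fin N) (hab : ∀ k, a k ≠ b k)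
    (hkl : ∀ (σ τ : Fin m → Bool) (k l : Fin m), cch a b σ k = cch a b τ l → k = l)
    (σ : Fin m → Bool) (k : Fin m) :
    Odd ((invc a b σ + Ecnt a b σ k) +
      (invc a b (Function.update σ k (!σ k)) + Ecnt a b (Function.update σ k (!σ k)) k)) := by
  classical
  set σ' := Function.update σ k (!σ k) with hσ'
  have hσ'k : σ' k = !σ k := Function.update_self k (!σ k) σ
  set j' : Fin N := cch a b σ k with hj'
  set j : Fin N := cch a b σ' k with hj
  have hcl : ∀ l : Fin m, l ≠ k → cch a b σ' l = cch a b σ l :=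
    fun l hl => cch_update_ne a b σ _ hl
  have hjj' : j ≠ j' := by
    rw [hj, hj']
    unfold cch
    rw [hσ'k]
    cases h : σ k <;> simp [h]
    · exact hab k
    · exact (hab k).symm
  set w : Fin m → ZMod 2 :=
    fun l => (if cch a b σ l < j then 1 else 0) + (if cch a b σ l < j' then 1 else 0) with hw
  have hne : ∀ (τ : Fin m → Bool) (l : Fin m), l ≠ k → cch a b σ l ≠ cch a b τ k := by
    intro τ l hl h
    exact hl (hkl σ τ l k h)
  have hne' : ∀ (τ : Fin m → Bool) (l : Fin m), l ≠ k → cch a b σ' l ≠ cch a b τ k := by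
    intro τ l hl h
    exact hl (hkl σ' τ l k h)
  -- Claim 1
  have claim1 : ((invc a b σ : ZMod 2) + (invc a b σ' : ZMod 2))
      = ∑ l ∈ Finset.univ.erase k, w l := by
    rw [invc, invc, card_filter_zmod, card_filter_zmod]
    rw [← Finset.univ_product_univ, Finset.sum_product, Finset.sum_product]
    have hpt : ∀ p q : Fin m,
        ((if p < q ∧ cch a b σ q < cch a b σ p then (1 : ZMod 2) else 0) +
          (if p < q ∧ cch a b σ' q < cch a b σ' p then (1 : ZMod 2) else 0))
        = (if q = k ∧ p < k then w p else 0) + (if p = k ∧ k < q then w q else 0) := by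
      intro p q
      by_cases hp : p = k <;> by_cases hq : q = k
      · rw [hp, hq]
        simp [lt_irrefl]
      · rw [hp]
        rcases lt_or_ge k q with hpq | hpq
        · rw [if_neg (fun hcon : q = k ∧ _ => hq hcon.1),
            if_pos (show k = k ∧ k < q from ⟨rfl, hpq⟩), zero_add,
            if_congr (and_iff_right hpq) rfl rfl, if_congr (and_iff_right hpq) rfl rfl,
            hcl q hq]
          simp only [hw]
          rw [hj, hj']
          exact add_comm _ _
        · have h2 : ¬ k < q := not_lt.mpr hpq
          simp [hq, h2]
      · rw [hq]
        rcases lt_or_ge p k with hpq | hpq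
        · rw [if_pos (show k = k ∧ p < k from ⟨rfl, hpq⟩),
            if_neg (fun hcon : p = k ∧ _ => hp hcon.1), add_zero,
            if_congr (and_iff_right hpq) rfl rfl, if_congr (and_iff_right hpq) rfl rfl,
            hcl p hp, flip_swap (hne σ p hp), flip_swap (hne σ' p hp)]
          simp only [hw]
          rw [hj, hj']
          have h2 : (1 : ZMod 2) + 1 = 0 := by decide
          linear_combination h2
        · have h2 : ¬ p < k := not_lt.mpr hpq
          simp [hp, h2]
      · rw [hcl p hp, hcl q hq, if_neg (fun hcon : q = k ∧ _ => hq hcon.1),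
          if_neg (fun hcon : p = k ∧ _ => hp hcon.1), add_zero]
        exact zmod_add_self _
    calc (∑ p : Fin m, ∑ q : Fin m, if p < q ∧ cch a b σ q < cch a b σ p then (1 : ZMod 2) else 0)
          + (∑ p : Fin m, ∑ q : Fin m, if p < q ∧ cch a b σ' q < cch a b σ' p then (1 : ZMod 2) else 0)
        = ∑ p : Fin m, ∑ q : Fin m,
            ((if q = k ∧ p < k then w p else 0) + (if p = k ∧ k < q then w q else 0)) := by
          rw [← Finset.sum_add_distrib]
          refine Finset.sum_congr rfl fun p _ => ?_
          rw [← Finset.sum_add_distrib]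
          exact Finset.sum_congr rfl fun q _ => hpt p q
      _ = (∑ p : Fin m, ∑ q : Fin m, (if q = k ∧ p < k then w p else 0))
          + (∑ p : Fin m, ∑ q : Fin m, (if p = k ∧ k < q then w q else 0)) := by
          rw [← Finset.sum_add_distrib]
          exact Finset.sum_congr rfl fun p _ => Finset.sum_add_distrib
      _ = (∑ p ∈ Finset.univ.filter (· < k), w p) + (∑ q ∈ Finset.univ.filter (k < ·), w q) := by
          congr 1
          · have inner : ∀ p : Fin m, (∑ q : Fin m, if q = k ∧ p < k then w p else 0)
                = if p < k then w p else 0 := by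
              intro p
              rw [Finset.sum_eq_single k
                (fun q _ hqk => if_neg (fun h => hqk h.1))
                (fun h => absurd (Finset.mem_univ k) h)]
              by_cases h2 : p < k <;> simp [h2]
            rw [Finset.sum_congr rfl fun p _ => inner p, ← Finset.sum_filter]
          · have inner2 : ∀ p : Fin m, (∑ q : Fin m, if p = k ∧ k < q then w q else 0)
                = if p = k then (∑ q ∈ Finset.univ.filter (k < ·), w q) else 0 := by
              intro p
              by_cases hp : p = k
              · rw [if_pos hp]
                rw [Finset.sum_filter]
                refine Finset.sum_congr rfl fun q _ => ?_
                simp [hp]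
              · rw [if_neg hp]
                exact Finset.sum_eq_zero fun q _ => if_neg (fun h => hp h.1)
            rw [Finset.sum_congr rfl fun p _ => inner2 p,
              Finset.sum_eq_single k
                (fun p _ hpk => if_neg hpk)
                (fun h => absurd (Finset.mem_univ k) h),
              if_pos rfl]
      _ = ∑ l ∈ Finset.univ.erase k, w l := by
          have e1 : Finset.univ.filter (· < k) = (Finset.univ.erase k).filter (· < k) := by
            ext l
            simp only [Finset.mem_filter, Finset.mem_erase, Finset.mem_univ, true_and, and_true]
            exact ⟨fun h => ⟨ne_of_lt h, h⟩, fun h => h.2⟩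
          have e2 : Finset.univ.filter (k < ·) = (Finset.univ.erase k).filter (fun l => ¬ l < k) := by
            ext l
            simp only [Finset.mem_filter, Finset.mem_erase, Finset.mem_univ, true_and, and_true]
            exact ⟨fun h => ⟨ne_of_gt h, not_lt.mpr (le_of_lt h)⟩,
              fun h => lt_of_le_of_ne (not_lt.mp h.2) (Ne.symm h.1)⟩
          rw [e1, e2, Finset.sum_filter_add_sum_filter_not]
  -- Claim 2
  have claim2 : ((Ecnt a b σ k : ZMod 2) + (Ecnt a b σ' k : ZMod 2))
      = (∑ l ∈ Finset.univ.erase k, w l) + 1 := by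
    have ej : cch a b (Function.update σ k (!σ k)) k = j := by rw [← hσ', hj]
    have ej' : cch a b (Function.update σ' k (!σ' k)) k = j' := by
      rw [hj']
      refine cch_congr a b ?_
      rw [Function.update_self, hσ'k, Bool.not_not]
    rw [Ecnt, Ecnt, card_filter_zmod, card_filter_zmod]
    have r1 : ∀ l : Fin m, (if cch a b σ l < cch a b (Function.update σ k (!σ k)) k
        then (1 : ZMod 2) else 0) = if cch a b σ l < j then 1 else 0 := by
      intro l; rw [ej]
    have r2 : ∀ l : Fin m, (if cch a b σ' l < cch a b (Function.update σ' k (!σ' k)) k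
        then (1 : ZMod 2) else 0) = if cch a b σ' l < j' then 1 else 0 := by
      intro l; rw [ej']
    rw [Finset.sum_congr rfl fun l _ => r1 l, Finset.sum_congr rfl fun l _ => r2 l]
    rw [← Finset.sum_erase_add Finset.univ _ (Finset.mem_univ k),
      ← Finset.sum_erase_add Finset.univ _ (Finset.mem_univ k)]
    have hfk : ((if cch a b σ k < j then (1 : ZMod 2) else 0)
        + (if cch a b σ' k < j' then (1 : ZMod 2) else 0)) = 1 := by
      rw [← hj', ← hj]
      exact flip_ind hjj'.symm
    calc (∑ l ∈ Finset.univ.erase k, if cch a b σ l < j then (1:ZMod 2) else 0)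
          + (if cch a b σ k < j then (1:ZMod 2) else 0)
          + ((∑ l ∈ Finset.univ.erase k, if cch a b σ' l < j' then (1:ZMod 2) else 0)
          + (if cch a b σ' k < j' then (1:ZMod 2) else 0))
        = ((∑ l ∈ Finset.univ.erase k, if cch a b σ l < j then (1:ZMod 2) else 0)
          + (∑ l ∈ Finset.univ.erase k, if cch a b σ' l < j' then (1:ZMod 2) else 0))
          + (((if cch a b σ k < j then (1:ZMod 2) else 0))
          + (if cch a b σ' k < j' then (1:ZMod 2) else 0)) := by ring
      _ = (∑ l ∈ Finset.univ.erase k, w l) + 1 := by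
          rw [hfk, ← Finset.sum_add_distrib]
          congr 1
          refine Finset.sum_congr rfl fun l hl => ?_
          have hlk : l ≠ k := (Finset.mem_erase.mp hl).1
          rw [hcl l hlk]
  -- conclude
  apply odd_of_zmod'
  push_cast
  rw [add_add_add_comm, claim1, claim2, ← add_assoc, zmod_add_self, zero_add]

end Comb
open MvPolynomial Finset

section QAux

variable {K : Type} [Field K] {N : ℕ}

lemma kd_apply (M : Type) [AddCommGroup M] [Module (MvPolynomial (Fin N) K) M]
    (w : Finset (Fin N) → M) (s : Finset (Fin N)) :
    kd K N M w s = ∑ j ∈ sᶜ, ((-1 : ℤ) ^ ((s.filter (· < j)).card)) •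
      ((MvPolynomial.X j : MvPolynomial (Fin N) K) • w (insert j s)) := rfl

lemma hsmul (I : Ideal (MvPolynomial (Fin N) K)) (r p : MvPolynomial (Fin N) K) :
    r • (Ideal.Quotient.mk I p) = Ideal.Quotient.mk I (r * p) := by
  rw [← smul_eq_mul]
  exact (Submodule.Quotient.mk_smul I r p).symm

noncomputable def ql (I : Ideal (MvPolynomial (Fin N) K)) (μ : Fin N →₀ ℕ)
    (t : MvPolynomial (Fin N) K ⧸ I) : K :=
  MvPolynomial.coeff μ (Ideal.Quotient.mk_surjective t).choose

lemma ql_mk {I : Ideal (MvPolynomial (Fin N) K)} {μ : Fin N →₀ ℕ}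
    (hkill : ∀ p ∈ I, MvPolynomial.coeff μ p = 0) (p : MvPolynomial (Fin N) K) :
    ql I μ (Ideal.Quotient.mk I p) = MvPolynomial.coeff μ p := by
  have hs : Ideal.Quotient.mk I (Ideal.Quotient.mk_surjective (Ideal.Quotient.mk I p)).choose
      = Ideal.Quotient.mk I p :=
    (Ideal.Quotient.mk_surjective (Ideal.Quotient.mk I p)).choose_spec
  have hmem := Ideal.Quotient.eq.mp hs
  have h0 := hkill _ hmem
  rw [MvPolynomial.coeff_sub] at h0
  unfold ql
  exact sub_eq_zero.mp h0

lemma ql_zero {I : Ideal (MvPolynomial (Fin N) K)} {μ : Fin N →₀ ℕ}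
    (hkill : ∀ p ∈ I, MvPolynomial.coeff μ p = 0) :
    ql I μ 0 = 0 := by
  have h := ql_mk hkill 0
  rw [map_zero] at h
  rw [h, MvPolynomial.coeff_zero]

end QAux

section CoeffKill

variable {K : Type} [Field K] {N : ℕ} {Δ : Finset (Finset (Fin N))}
  {I : Ideal (MvPolynomial (Fin N) K)}

lemma edge_ne (hdim : ∀ F ∈ Δ, F.card = 2) {e f : Fin N}
    (hef : ({e, f} : Finset (Fin N)) ∈ Δ) : e ≠ f := by
  intro h
  have := hdim _ hef
  rw [h] at this
  simp at this

lemma hXX (hdim : ∀ F ∈ Δ, F.card = 2)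
    (hI : I = Ideal.span ((fun F => ∏ v ∈ F, (MvPolynomial.X v : MvPolynomial (Fin N) K)) '' ↑Δ))
    {e f : Fin N} (hef : ({e, f} : Finset (Fin N)) ∈ Δ) :
    (MvPolynomial.X e : MvPolynomial (Fin N) K) * MvPolynomial.X f ∈ I := by
  rw [hI]
  apply Ideal.subset_span
  refine ⟨{e, f}, hef, ?_⟩
  exact Finset.prod_pair (edge_ne hdim hef)

lemma coeff_kill (hdim : ∀ F ∈ Δ, F.card = 2)
    (hI : I = Ideal.span ((fun F => ∏ v ∈ F, (MvPolynomial.X v : MvPolynomial (Fin N) K)) '' ↑Δ))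
    (U : Finset (Fin N))
    (hU : ∀ e f : Fin N, ({e, f} : Finset (Fin N)) ∈ Δ → ¬(e ∈ U ∧ f ∈ U)) :
    ∀ p ∈ I, MvPolynomial.coeff (mexp U) p = 0 := by
  suffices h : ∀ p ∈ I, ∀ r, MvPolynomial.coeff (mexp U) (r * p) = 0 by
    intro p hp
    have := h p hp 1
    rwa [one_mul] at this
  intro p hp
  rw [hI] at hp
  induction hp using Submodule.span_induction with
  | mem x h =>
    obtain ⟨F, hF, rfl⟩ := h
    obtain ⟨e, f, hef, rfl⟩ := Finset.card_eq_two.mp (hdim F (Finset.mem_coe.mp hF))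
    intro r
    show MvPolynomial.coeff (mexp U) (r * ∏ v ∈ ({e, f} : Finset (Fin N)), MvPolynomial.X v) = 0
    rw [Finset.prod_pair hef, ← mul_assoc, MvPolynomial.coeff_mul_X']
    by_cases hfU : f ∈ U
    · rw [if_pos ((mem_support_mexp U f).mpr hfU), mexp_sub_single hfU,
        MvPolynomial.coeff_mul_X', if_neg]
      intro hsup
      have heU : e ∈ U := Finset.mem_of_mem_erase ((mem_support_mexp _ e).mp hsup)
      exact hU e f (Finset.mem_coe.mp hF) ⟨heU, hfU⟩
    · rw [if_neg (fun hsup => hfU ((mem_support_mexp U f).mp hsup))]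
  | zero => intro r; rw [mul_zero, MvPolynomial.coeff_zero]
  | add x y hx hy ihx ihy => intro r; rw [mul_add, MvPolynomial.coeff_add, ihx r, ihy r, add_zero]
  | smul c x hx ih => intro r; rw [smul_eq_mul, ← mul_assoc]; exact ih (r * c)

end CoeffKill
section Forward

open MvPolynomial Finset

theorem fwd_mem_ZB (K : Type) [Field K] (N : ℕ) (Δ : Finset (Finset (Fin N)))
    (m : ℕ) (a b : Fin m → Fin N)
    (hdim : ∀ F ∈ Δ, F.card = 2)
    (he : ∀ k, ({a k, b k} : Finset (Fin N)) ∈ Δ)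
    (I : Ideal (MvPolynomial (Fin N) K))
    (hI : I = Ideal.span ((fun F => ∏ v ∈ F, (MvPolynomial.X v : MvPolynomial (Fin N) K)) '' ↑Δ))
    (z : Finset (Fin N) → MvPolynomial (Fin N) K ⧸ I)
    (hzfun : ∀ s, z s = if s = Finset.image b Finset.univ
      then Ideal.Quotient.mk I (∏ k, MvPolynomial.X (a k)) else 0) :
    z ∈ ZB K N (MvPolynomial (Fin N) K ⧸ I) := by
  classical
  rw [ZB, LinearMap.mem_ker]
  funext s
  rw [kd_apply]
  refine (Finset.sum_eq_zero ?_).trans rfl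
  intro j hj
  rw [hzfun (insert j s)]
  by_cases hins : insert j s = Finset.image b Finset.univ
  · rw [if_pos hins]
    have hjS : j ∈ Finset.image b Finset.univ := hins ▸ Finset.mem_insert_self j s
    obtain ⟨l, -, rfl⟩ := Finset.mem_image.mp hjS
    have hmem : (MvPolynomial.X (b l) : MvPolynomial (Fin N) K) * ∏ k, MvPolynomial.X (a k) ∈ I := by
      have h1 : (MvPolynomial.X (b l) : MvPolynomial (Fin N) K) * ∏ k, MvPolynomial.X (a k)
          = (∏ i ∈ Finset.univ.erase l, MvPolynomial.X (a i)) *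
            ((MvPolynomial.X (a l) : MvPolynomial (Fin N) K) * MvPolynomial.X (b l)) := by
        rw [← Finset.mul_prod_erase Finset.univ _ (Finset.mem_univ l)]
        ring
      rw [h1]
      exact Ideal.mul_mem_left _ _ (hXX hdim hI (he l))
    rw [hsmul, Ideal.Quotient.eq_zero_iff_mem.mpr hmem, smul_zero]
  · rw [if_neg hins, smul_zero, smul_zero]

end Forward
section ForwardB

open MvPolynomial Finset

theorem fwd_not_mem_Bd (K : Type) [Field K] (N : ℕ) (Δ : Finset (Finset (Fin N)))
    (m : ℕ) (a b : Fin m → Fin N)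
    (hdim : ∀ F ∈ Δ, F.card = 2)
    (he : ∀ k, ({a k, b k} : Finset (Fin N)) ∈ Δ)
    (I : Ideal (MvPolynomial (Fin N) K))
    (hI : I = Ideal.span ((fun F => ∏ v ∈ F, (MvPolynomial.X v : MvPolynomial (Fin N) K)) '' ↑Δ))
    (hdisc : ∀ k l, k ≠ l → Disconnected Δ ({a k, b k} : Finset (Fin N)) {a l, b l})
    (z : Finset (Fin N) → MvPolynomial (Fin N) K ⧸ I)
    (hzfun : ∀ s, z s = if s = Finset.image b Finset.univ
      then Ideal.Quotient.mk I (∏ k, MvPolynomial.X (a k)) else 0) :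
    z ∉ Bd K N (MvPolynomial (Fin N) K ⧸ I) := by
  classical
  -- distinctness facts
  have hab : ∀ k, a k ≠ b k := fun k => edge_ne hdim (he k)
  have hdist : ∀ k l, k ≠ l → a k ≠ a l ∧ a k ≠ b l ∧ b k ≠ a l ∧ b k ≠ b l := by
    intro k l hkl
    have hint := (hdisc k l hkl).1
    have hni : ∀ x : Fin N, x ∈ ({a k, b k} : Finset (Fin N)) →
        x ∈ ({a l, b l} : Finset (Fin N)) → False := by
      intro x h1 h2
      have hx : x ∈ ({a k, b k} : Finset (Fin N)) ∩ {a l, b l} := Finset.mem_inter.mpr ⟨h1, h2⟩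
      rw [hint] at hx
      exact absurd hx (Finset.notMem_empty x)
    exact ⟨fun hx => hni (a k) (by simp) (by simp [hx]),
      fun hx => hni (a k) (by simp) (by simp [hx]),
      fun hx => hni (b k) (by simp) (by simp [hx]),
      fun hx => hni (b k) (by simp) (by simp [hx])⟩
  have hkl' : ∀ (σ τ : Fin m → Bool) (k l : Fin m), cch a b σ k = cch a b τ l → k = l := by
    intro σ τ k l h
    by_contra hne
    have hd := hdist k l hne
    unfold cch at h
    rcases Bool.dichotomy (σ k) with h1 | h1 <;> rcases Bool.dichotomy (τ l) with h2 | h2 <;>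
      rw [h1, h2] at h <;> simp at h
    exacts [hd.2.2.2 h, hd.2.2.1 h, hd.2.1 h, hd.1 h]
  have hcchinj : ∀ σ : Fin m → Bool, Function.Injective (cch a b σ) :=
    fun σ k l h => hkl' σ σ k l h
  have hbinj : Function.Injective b := by
    intro k l h
    refine hkl' (fun _ => false) (fun _ => false) k l ?_
    unfold cch
    simpa using h
  have hainj : Function.Injective a := by
    intro k l h
    refine hkl' (fun _ => true) (fun _ => true) k l ?_
    unfold cch
    simpa using h
  have hcchmem : ∀ (τ : Fin m → Bool) (k : Fin m), cch a b τ k = a k ∨ cch a b τ k = b k := by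
    intro τ k
    rcases Bool.dichotomy (τ k) with h | h <;> simp [cch, h]
  -- notation
  set S : Finset (Fin N) := Finset.image b Finset.univ with hS
  set P : MvPolynomial (Fin N) K := ∏ k, MvPolynomial.X (a k) with hP
  set V₀ : Finset (Fin N) := Finset.image a Finset.univ ∪ Finset.image b Finset.univ with hV₀
  set sfun : (Fin m → Bool) → Finset (Fin N) :=
    fun σ => Finset.image (cch a b σ) Finset.univ with hsfun
  set nn : (Fin m → Bool) → Fin m → Fin N := fun σ => cch a b (fun i => !σ i) with hnn
  have hnn_upd : ∀ σ k, nn σ k = cch a b (Function.update σ k (!σ k)) k := by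
    intro σ k
    rw [hnn]
    exact cch_congr a b (by rw [Function.update_self])
  have hnn_flip : ∀ (σ : Fin m → Bool) (k : Fin m),
      nn (Function.update σ k (!σ k)) k = cch a b σ k := by
    intro σ k
    rw [hnn]
    exact cch_congr a b (by rw [Function.update_self, Bool.not_not])
  have hcch_ne_nn : ∀ σ k, cch a b σ k ≠ nn σ k := by
    intro σ k
    rcases Bool.dichotomy (σ k) with h | h <;> simp [hnn, cch, h]
    · exact (hab k).symm
    · exact hab k
  have hV0diff : ∀ σ, V₀ \ sfun σ = Finset.image (nn σ) Finset.univ := by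
    intro σ
    ext x
    constructor
    · intro hx
      obtain ⟨hxV, hxs⟩ := Finset.mem_sdiff.mp hx
      have hks : ∀ k : Fin m, cch a b σ k ∈ sfun σ :=
        fun k => Finset.mem_image.mpr ⟨k, Finset.mem_univ k, rfl⟩
      rcases Finset.mem_union.mp hxV with h | h
      · obtain ⟨k, -, rfl⟩ := Finset.mem_image.mp h
        refine Finset.mem_image.mpr ⟨k, Finset.mem_univ k, ?_⟩
        rcases Bool.dichotomy (σ k) with hb' | hb'
        · simp [hnn, cch, hb']
        · exact absurd (by simpa [cch, hb'] using hks k) hxs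
      · obtain ⟨k, -, rfl⟩ := Finset.mem_image.mp h
        refine Finset.mem_image.mpr ⟨k, Finset.mem_univ k, ?_⟩
        rcases Bool.dichotomy (σ k) with hb' | hb'
        · exact absurd (by simpa [cch, hb'] using hks k) hxs
        · simp [hnn, cch, hb']
    · intro hx
      obtain ⟨k, -, rfl⟩ := Finset.mem_image.mp hx
      refine Finset.mem_sdiff.mpr ⟨?_, ?_⟩
      · rw [hV₀]
        rcases hcchmem (fun i => !σ i) k with h | h
        · refine Finset.mem_union_left _ ?_
          rw [show nn σ k = a k from h]
          exact Finset.mem_image_of_mem a (Finset.mem_univ k)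
        · refine Finset.mem_union_right _ ?_
          rw [show nn σ k = b k from h]
          exact Finset.mem_image_of_mem b (Finset.mem_univ k)
      · intro hmem'
        obtain ⟨l, -, hl⟩ := Finset.mem_image.mp hmem'
        have hlk : l = k := hkl' σ (fun i => !σ i) l k hl
        rw [hlk] at hl
        exact hcch_ne_nn σ k hl
  have hstdT : ∀ τ : Fin m → Bool, ∀ p ∈ I,
      MvPolynomial.coeff (mexp (Finset.image (cch a b τ) Finset.univ)) p = 0 := by
    intro τ
    apply coeff_kill hdim hI
    rintro e f hef ⟨heU, hfU⟩
    obtain ⟨k, -, rfl⟩ := Finset.mem_image.mp heU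
    obtain ⟨l, -, rfl⟩ := Finset.mem_image.mp hfU
    have hkl2 : k ≠ l := fun h => edge_ne hdim hef (h ▸ rfl)
    refine (hdisc k l hkl2).2 (cch a b τ k) ?_ (cch a b τ l) ?_ hef
    · rcases hcchmem τ k with h | h <;> rw [h] <;> simp
    · rcases hcchmem τ l with h | h <;> rw [h] <;> simp
  have hstdσ : ∀ σ, ∀ p ∈ I, MvPolynomial.coeff (mexp (V₀ \ sfun σ)) p = 0 := by
    intro σ
    rw [hV0diff σ, hnn]
    exact hstdT _
  -- the functional
  set Φ : (Finset (Fin N) → MvPolynomial (Fin N) K ⧸ I) → K :=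
    fun w => ∑ σ : Fin m → Bool,
      (-1 : K) ^ (invc a b σ) * ql I (mexp (V₀ \ sfun σ)) (w (sfun σ)) with hΦ
  -- sign juggling helper
  have hzs : ∀ (e : ℕ) (x : K), ((-1 : ℤ) ^ e) • x = (-1 : K) ^ e * x := by
    intro e x
    rw [zsmul_eq_mul]
    push_cast
    ring
  -- Part C : value on z
  have hs0 : ∀ σ, sfun σ = S ↔ σ = (fun _ => false) := by
    intro σ
    constructor
    · intro hσ
      funext k
      by_contra hk
      have hk' : σ k = true := by
        cases h : σ k
        · exact absurd h hk
        · rfl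
      have hc : cch a b σ k = a k := by simp [cch, hk']
      have haS : a k ∈ S := by
        rw [← hc, ← hσ]
        exact Finset.mem_image_of_mem _ (Finset.mem_univ k)
      obtain ⟨l, -, hbl⟩ := Finset.mem_image.mp haS
      by_cases hlk : l = k
      · rw [hlk] at hbl
        exact hab k hbl.symm
      · exact (hdist k l (fun h => hlk h.symm)).2.1 hbl.symm
    · rintro rfl
      have hcb : cch a b (fun _ => false) = b := funext fun k => by simp [cch]
      show Finset.image (cch a b (fun _ => false)) Finset.univ = S
      rw [hcb, hS]
  have hnn0 : nn (fun _ => false) = a := funext fun k => by simp [hnn, cch]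
  have partC : Φ z = (-1 : K) ^ (invc a b (fun _ => false)) := by
    rw [hΦ]
    dsimp only
    rw [Finset.sum_eq_single (fun _ => false)]
    · rw [hzfun, if_pos ((hs0 _).mpr rfl), ql_mk (hstdσ _) _]
      have h1 : V₀ \ sfun (fun _ => false) = Finset.image a Finset.univ := by
        rw [hV0diff, hnn0]
      have h2 : P = ∏ v ∈ Finset.image a Finset.univ, MvPolynomial.X v := by
        rw [hP, Finset.prod_image (fun x _ y _ h => hainj h)]
      rw [h1, h2, prod_X_eq_monomial, MvPolynomial.coeff_monomial, if_pos rfl, mul_one]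
    · intro σ _ hσ
      rw [hzfun, if_neg (fun h => hσ ((hs0 σ).mp h)), ql_zero (hstdσ σ), mul_zero]
    · intro h
      exact absurd (Finset.mem_univ _) h
  -- Part B : Φ vanishes on boundaries
  have partB : ∀ w : Finset (Fin N) → MvPolynomial (Fin N) K ⧸ I,
      Φ (kd K N (MvPolynomial (Fin N) K ⧸ I) w) = 0 := by
    intro w
    set W : Finset (Fin N) → MvPolynomial (Fin N) K :=
      fun t => (Ideal.Quotient.mk_surjective (w t)).choose with hWdef
    have hW : ∀ t, Ideal.Quotient.mk I (W t) = w t :=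
      fun t => (Ideal.Quotient.mk_surjective (w t)).choose_spec
    have step1 : ∀ s : Finset (Fin N), kd K N (MvPolynomial (Fin N) K ⧸ I) w s
        = Ideal.Quotient.mk I (∑ j ∈ sᶜ, ((-1 : ℤ) ^ ((s.filter (· < j)).card)) •
          (W (insert j s) * MvPolynomial.X j)) := by
      intro s
      rw [kd_apply, map_sum]
      refine Finset.sum_congr rfl fun j _ => ?_
      rw [map_zsmul]
      congr 1
      rw [← hW (insert j s), hsmul]
      exact congrArg _ (mul_comm _ _)
    have hEeq : ∀ σ k, (((sfun σ).filter (· < nn σ k)).card) = Ecnt a b σ k := by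
      intro σ k
      rw [hnn_upd σ k, hsfun]
      dsimp only
      rw [Finset.filter_image, Finset.card_image_of_injective _ (hcchinj σ), Ecnt]
    have hnnmem : ∀ σ k, nn σ k ∈ V₀ \ sfun σ := by
      intro σ k
      rw [hV0diff σ]
      exact Finset.mem_image_of_mem _ (Finset.mem_univ k)
    have inner : ∀ σ : Fin m → Bool,
        (-1 : K) ^ (invc a b σ) * ql I (mexp (V₀ \ sfun σ))
          (kd K N (MvPolynomial (Fin N) K ⧸ I) w (sfun σ))
        = ∑ k : Fin m, (-1 : K) ^ (invc a b σ) * ((-1 : K) ^ (Ecnt a b σ k) *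
            MvPolynomial.coeff (mexp ((V₀ \ sfun σ).erase (nn σ k)))
              (W (insert (nn σ k) (sfun σ)))) := by
      intro σ
      rw [step1, ql_mk (hstdσ σ), MvPolynomial.coeff_sum]
      have hvan : ∀ j ∈ (sfun σ)ᶜ, j ∉ V₀ \ sfun σ →
          MvPolynomial.coeff (mexp (V₀ \ sfun σ))
            (((-1 : ℤ) ^ (((sfun σ).filter (· < j)).card)) •
              (W (insert j (sfun σ)) * MvPolynomial.X j)) = 0 := by
        intro j _ hj
        rw [MvPolynomial.coeff_smul, MvPolynomial.coeff_mul_X',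
          if_neg (fun hsup => hj ((mem_support_mexp _ j).mp hsup)), smul_zero]
      have hsub' : V₀ \ sfun σ ⊆ (sfun σ)ᶜ := by
        intro x hx
        exact Finset.mem_compl.mpr (Finset.mem_sdiff.mp hx).2
      rw [← Finset.sum_subset hsub' hvan, hV0diff σ,
        Finset.sum_image (fun x _ y _ h => hkl' (fun i => !σ i) (fun i => !σ i) x y h)]
      rw [Finset.mul_sum]
      refine Finset.sum_congr rfl fun k _ => ?_
      congr 1
      show MvPolynomial.coeff (mexp (Finset.image (nn σ) Finset.univ))
          (((-1 : ℤ) ^ (((sfun σ).filter (· < nn σ k)).card)) •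
            (W (insert (nn σ k) (sfun σ)) * MvPolynomial.X (nn σ k)))
        = (-1 : K) ^ (Ecnt a b σ k) *
            MvPolynomial.coeff (mexp ((Finset.image (nn σ) Finset.univ).erase (nn σ k)))
              (W (insert (nn σ k) (sfun σ)))
      have hmem2 : nn σ k ∈ Finset.image (nn σ) Finset.univ :=
        Finset.mem_image_of_mem _ (Finset.mem_univ k)
      rw [MvPolynomial.coeff_smul, hzs, MvPolynomial.coeff_mul_X',
        if_pos ((mem_support_mexp _ _).mpr hmem2), mexp_sub_single hmem2, hEeq]
    -- set-equality for the involution pairing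
    have hT : ∀ (σ : Fin m → Bool) (k : Fin m), insert (nn σ k) (sfun σ)
        = insert (cch a b σ k) (sfun (Function.update σ k (!σ k))) := by
      intro σ k
      ext x
      simp only [Finset.mem_insert]
      constructor
      · rintro (rfl | hx)
        · right
          rw [hnn_upd σ k]
          exact Finset.mem_image_of_mem _ (Finset.mem_univ k)
        · obtain ⟨l, -, rfl⟩ := Finset.mem_image.mp hx
          by_cases hlk : l = k
          · left; rw [hlk]
          · right
            rw [← cch_update_ne a b σ (!σ k) hlk]
            exact Finset.mem_image_of_mem _ (Finset.mem_univ l)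
      · rintro (rfl | hx)
        · right; exact Finset.mem_image_of_mem _ (Finset.mem_univ k)
        · obtain ⟨l, -, rfl⟩ := Finset.mem_image.mp hx
          by_cases hlk : l = k
          · left
            rw [hlk]
            exact (hnn_upd σ k).symm
          · right
            rw [cch_update_ne a b σ (!σ k) hlk]
            exact Finset.mem_image_of_mem _ (Finset.mem_univ l)
    rw [hΦ]
    dsimp only
    rw [Finset.sum_congr rfl fun σ _ => inner σ, ← Finset.sum_product']
    refine Finset.sum_involution
      (fun x _ => (Function.update x.1 x.2 (!x.1 x.2), x.2)) ?_ ?_ ?_ ?_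
    · rintro ⟨σ, k⟩ -
      dsimp only
      have hTpair : insert (nn σ k) (sfun σ)
          = insert (nn (Function.update σ k (!σ k)) k) (sfun (Function.update σ k (!σ k))) := by
        rw [hT σ k, hnn_flip σ k]
      have hUpair : (V₀ \ sfun σ).erase (nn σ k)
          = (V₀ \ sfun (Function.update σ k (!σ k))).erase
              (nn (Function.update σ k (!σ k)) k) := by
        rw [← Finset.sdiff_insert, ← Finset.sdiff_insert, hTpair]
      rw [← hUpair, ← hTpair]
      have hsign := neg_one_pow_add_eq_zero (K := K) (parity_main a b hab hkl' σ k)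
      rw [pow_add, pow_add] at hsign
      linear_combination
        (MvPolynomial.coeff (mexp ((V₀ \ sfun σ).erase (nn σ k)))
          (W (insert (nn σ k) (sfun σ)))) * hsign
    · rintro ⟨σ, k⟩ - -
      intro heq
      have h1 : Function.update σ k (!σ k) k = σ k := congrFun (congrArg Prod.fst heq) k
      rw [Function.update_self] at h1
      simp at h1
    · rintro ⟨σ, k⟩ -
      exact Finset.mem_univ _
    · rintro ⟨σ, k⟩ -
      dsimp only
      have h1 : Function.update (Function.update σ k (!σ k)) k
          (!(Function.update σ k (!σ k)) k) = σ := by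
        funext i
        by_cases hi : i = k
        · rw [hi, Function.update_self, Function.update_self, Bool.not_not]
        · rw [Function.update_of_ne hi, Function.update_of_ne hi]
      rw [h1]

  -- conclusion
  intro hBd
  obtain ⟨w, hw⟩ := LinearMap.mem_range.mp hBd
  have h0 := partB w
  rw [hw, partC] at h0
  exact pow_ne_zero _ (neg_ne_zero.mpr one_ne_zero) h0
end ForwardB
section Converse

open MvPolynomial Finset

lemma kd_indicator {K : Type} [Field K] {N : ℕ} (M : Type) [AddCommGroup M]
    [Module (MvPolynomial (Fin N) K) M] (T s : Finset (Fin N)) (v : M) :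
    kd K N M (fun t => if t = T then v else 0) s
      = ∑ j ∈ sᶜ.filter (fun j => insert j s = T),
          ((-1 : ℤ) ^ ((s.filter (· < j)).card)) •
            ((MvPolynomial.X j : MvPolynomial (Fin N) K) • v) := by
  classical
  rw [kd_apply, Finset.sum_filter]
  refine Finset.sum_congr rfl fun j _ => ?_
  show ((-1 : ℤ) ^ ((s.filter (· < j)).card)) •
      ((MvPolynomial.X j : MvPolynomial (Fin N) K) • (if insert j s = T then v else 0)) = _
  by_cases h : insert j s = T
  · rw [if_pos h, if_pos h]
  · rw [if_neg h, if_neg h, smul_zero, smul_zero]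

lemma filter_insert_eq_singleton {N : ℕ} (T s : Finset (Fin N)) (j₀ : Fin N)
    (hj₀ : j₀ ∉ s) (hT : insert j₀ s = T) :
    sᶜ.filter (fun j => insert j s = T) = {j₀} := by
  ext j
  simp only [Finset.mem_filter, Finset.mem_compl, Finset.mem_singleton]
  constructor
  · rintro ⟨hjs, hj⟩
    have hjmem : j ∈ T := hj ▸ Finset.mem_insert_self j s
    rw [← hT] at hjmem
    rcases Finset.mem_insert.mp hjmem with h | h
    · exact h
    · exact absurd h hjs
  · rintro rfl
    exact ⟨hj₀, hT⟩

lemma double_sign_smul {K : Type} [Field K] {N : ℕ} {I : Ideal (MvPolynomial (Fin N) K)}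
    (e : ℕ) (r : MvPolynomial (Fin N) K) (x : MvPolynomial (Fin N) K ⧸ I) :
    ((-1 : ℤ) ^ e) • (r • (((-1 : ℤ) ^ e) • x)) = r • x := by
  rw [smul_comm r, smul_smul, ← pow_add, Even.neg_one_pow ⟨e, rfl⟩, one_smul]

theorem conA (K : Type) [Field K] (N : ℕ) (Δ : Finset (Finset (Fin N)))
    (m : ℕ) (a b : Fin m → Fin N)
    (hdim : ∀ F ∈ Δ, F.card = 2)
    (he : ∀ k, ({a k, b k} : Finset (Fin N)) ∈ Δ)
    (I : Ideal (MvPolynomial (Fin N) K))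
    (hI : I = Ideal.span ((fun F => ∏ v ∈ F, (MvPolynomial.X v : MvPolynomial (Fin N) K)) '' ↑Δ))
    (hanotS : ∀ i, a i ∉ Finset.image b Finset.univ)
    (t : Fin m)
    (hbt : (MvPolynomial.X (b t) : MvPolynomial (Fin N) K) *
      ∏ i ∈ Finset.univ.erase t, MvPolynomial.X (a i) ∈ I)
    (z : Finset (Fin N) → MvPolynomial (Fin N) K ⧸ I)
    (hzfun : ∀ s, z s = if s = Finset.image b Finset.univ
      then Ideal.Quotient.mk I (∏ k, MvPolynomial.X (a k)) else 0) :
    z ∈ Bd K N (MvPolynomial (Fin N) K ⧸ I) := by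
  classical
  set S : Finset (Fin N) := Finset.image b Finset.univ with hS
  set P : MvPolynomial (Fin N) K := ∏ k, MvPolynomial.X (a k) with hP
  set q : MvPolynomial (Fin N) K := ∏ i ∈ Finset.univ.erase t, MvPolynomial.X (a i) with hq
  set T : Finset (Fin N) := insert (a t) S with hT
  set e₀ : ℕ := ((S.filter (· < a t)).card) with he₀
  have hatS : a t ∉ S := hanotS t
  have hXq : (MvPolynomial.X (a t) : MvPolynomial (Fin N) K) * q = P := by
    rw [hq, hP]
    exact Finset.mul_prod_erase Finset.univ (fun i => MvPolynomial.X (a i)) (Finset.mem_univ t)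
  refine LinearMap.mem_range.mpr
    ⟨(fun s => if s = T then ((-1 : ℤ) ^ e₀) • Ideal.Quotient.mk I q else 0), ?_⟩
  funext s
  rw [kd_indicator, hzfun s]
  by_cases hs : s = S
  · rw [hs, if_pos rfl, filter_insert_eq_singleton T S (a t) hatS rfl, Finset.sum_singleton]
    rw [double_sign_smul, hsmul, hXq]
  · rw [if_neg hs]
    refine Finset.sum_eq_zero ?_
    intro j hj
    obtain ⟨hjc, hjT⟩ := Finset.mem_filter.mp hj
    have hjs : j ∉ s := Finset.mem_compl.mp hjc
    have hjmem : j ∈ T := hjT ▸ Finset.mem_insert_self j s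
    rcases Finset.mem_insert.mp hjmem with hja | hjS
    · exfalso
      apply hs
      have h1 : s = T.erase j := by rw [← hjT, Finset.erase_insert hjs]
      rw [h1, hja, hT, Finset.erase_insert hatS]
    · obtain ⟨i, -, rfl⟩ := Finset.mem_image.mp hjS
      have hbiq : (MvPolynomial.X (b i) : MvPolynomial (Fin N) K) * q ∈ I := by
        by_cases hit : i = t
        · rw [hit]; exact hbt
        · have hmem : i ∈ Finset.univ.erase t := Finset.mem_erase.mpr ⟨hit, Finset.mem_univ i⟩
          have h2 : (MvPolynomial.X (b i) : MvPolynomial (Fin N) K) * q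
              = (∏ i' ∈ (Finset.univ.erase t).erase i, MvPolynomial.X (a i')) *
                (MvPolynomial.X (a i) * MvPolynomial.X (b i)) := by
            rw [hq, ← Finset.mul_prod_erase _ _ hmem]
            ring
          rw [h2]
          exact Ideal.mul_mem_left _ _ (hXX hdim hI (he i))
      have h3 : (MvPolynomial.X (b i) : MvPolynomial (Fin N) K) •
          (((-1 : ℤ) ^ e₀) • Ideal.Quotient.mk I q) = 0 := by
        rw [smul_comm, hsmul, Ideal.Quotient.eq_zero_iff_mem.mpr hbiq, smul_zero]
      rw [h3, smul_zero]

end Converse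
section ConverseB

open MvPolynomial Finset

set_option maxHeartbeats 1000000 in
theorem conB (K : Type) [Field K] (N : ℕ) (Δ : Finset (Finset (Fin N)))
    (m : ℕ) (a b : Fin m → Fin N)
    (hdim : ∀ F ∈ Δ, F.card = 2)
    (he : ∀ k, ({a k, b k} : Finset (Fin N)) ∈ Δ)
    (I : Ideal (MvPolynomial (Fin N) K))
    (hI : I = Ideal.span ((fun F => ∏ v ∈ F, (MvPolynomial.X v : MvPolynomial (Fin N) K)) '' ↑Δ))
    (hbinj : Function.Injective b)
    (hanotS : ∀ i, a i ∉ Finset.image b Finset.univ)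
    (k l : Fin m) (hklne : k ≠ l) (hakl : a k ≠ a l)
    (hedge : ({b k, b l} : Finset (Fin N)) ∈ Δ)
    (z : Finset (Fin N) → MvPolynomial (Fin N) K ⧸ I)
    (hzfun : ∀ s, z s = if s = Finset.image b Finset.univ
      then Ideal.Quotient.mk I (∏ k, MvPolynomial.X (a k)) else 0) :
    z ∈ Bd K N (MvPolynomial (Fin N) K ⧸ I) := by
  classical
  have hab : ∀ i, a i ≠ b i := fun i => edge_ne hdim (he i)
  set S : Finset (Fin N) := Finset.image b Finset.univ with hS
  set P : MvPolynomial (Fin N) K := ∏ i, MvPolynomial.X (a i) with hP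
  set S₁ : Finset (Fin N) := insert (a k) (S.erase (b k)) with hS₁
  set T₁ : Finset (Fin N) := insert (a k) S with hT₁
  set T₂ : Finset (Fin N) := insert (a l) S₁ with hT₂
  set q₁ : MvPolynomial (Fin N) K := ∏ i ∈ Finset.univ.erase k, MvPolynomial.X (a i) with hq₁
  set q₂ : MvPolynomial (Fin N) K :=
    MvPolynomial.X (b k) * ∏ i ∈ (Finset.univ.erase k).erase l, MvPolynomial.X (a i) with hq₂
  set e₁ : ℕ := ((S.filter (· < a k)).card) with he₁
  set f₁ : ℕ := ((S₁.filter (· < b k)).card) with hf₁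
  set f₂ : ℕ := ((S₁.filter (· < a l)).card) with hf₂
  set c₂ : ℤ := -((-1) ^ e₁ * (-1) ^ f₁ * (-1) ^ f₂) with hc₂
  -- basic membership facts
  have hbkS : b k ∈ S := Finset.mem_image_of_mem b (Finset.mem_univ k)
  have hakS : a k ∉ S := hanotS k
  have halS : a l ∉ S := hanotS l
  have hbknak : b k ≠ a k := (hab k).symm
  have hbkS₁ : b k ∉ S₁ := by
    rw [hS₁]
    intro hmem
    rcases Finset.mem_insert.mp hmem with h | h
    · exact hbknak h
    · exact Finset.notMem_erase _ _ h
  have halS₁ : a l ∉ S₁ := by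
    rw [hS₁]
    intro hmem
    rcases Finset.mem_insert.mp hmem with h | h
    · exact hakl h.symm
    · exact halS (Finset.mem_of_mem_erase h)
  have hS₁ne : S₁ ≠ S := fun h => hakS (h ▸ Finset.mem_insert_self (a k) (S.erase (b k)))
  have hbkal : b k ≠ a l := by
    intro h
    exact halS (h ▸ hbkS)
  have hbkT₂ : b k ∉ T₂ := by
    rw [hT₂]
    intro hmem
    rcases Finset.mem_insert.mp hmem with h | h
    · exact hbkal h
    · exact hbkS₁ h
  have hlek : l ∈ Finset.univ.erase k := Finset.mem_erase.mpr ⟨(fun h => hklne h.symm), Finset.mem_univ l⟩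
  have hXq₁ : (MvPolynomial.X (a k) : MvPolynomial (Fin N) K) * q₁ = P := by
    rw [hq₁, hP]
    exact Finset.mul_prod_erase Finset.univ (fun i => MvPolynomial.X (a i)) (Finset.mem_univ k)
  have hXq₂ : (MvPolynomial.X (a l) : MvPolynomial (Fin N) K) * q₂
      = MvPolynomial.X (b k) * q₁ := by
    rw [hq₁, hq₂, ← Finset.mul_prod_erase _ (fun i => MvPolynomial.X (a i)) hlek]
    ring
  -- membership of products in I
  have hq₂I : ∀ i : Fin m, i ≠ k → i ≠ l →
      (MvPolynomial.X (b i) : MvPolynomial (Fin N) K) * q₂ ∈ I := by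
    intro i hik hil
    have hmem : i ∈ (Finset.univ.erase k).erase l :=
      Finset.mem_erase.mpr ⟨hil, Finset.mem_erase.mpr ⟨hik, Finset.mem_univ i⟩⟩
    have h2 : (MvPolynomial.X (b i) : MvPolynomial (Fin N) K) * q₂
        = (MvPolynomial.X (b k) * ∏ i' ∈ ((Finset.univ.erase k).erase l).erase i,
            MvPolynomial.X (a i')) * (MvPolynomial.X (a i) * MvPolynomial.X (b i)) := by
      rw [hq₂, ← Finset.mul_prod_erase _ (fun i' => MvPolynomial.X (a i')) hmem]
      ring
    rw [h2]
    exact Ideal.mul_mem_left _ _ (hXX hdim hI (he i))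
  have hq₁I : ∀ i : Fin m, i ≠ k →
      (MvPolynomial.X (b i) : MvPolynomial (Fin N) K) * q₁ ∈ I := by
    intro i hik
    have hmem : i ∈ Finset.univ.erase k := Finset.mem_erase.mpr ⟨hik, Finset.mem_univ i⟩
    have h2 : (MvPolynomial.X (b i) : MvPolynomial (Fin N) K) * q₁
        = (∏ i' ∈ (Finset.univ.erase k).erase i, MvPolynomial.X (a i')) *
          (MvPolynomial.X (a i) * MvPolynomial.X (b i)) := by
      rw [hq₁, ← Finset.mul_prod_erase _ (fun i' => MvPolynomial.X (a i')) hmem]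
      ring
    rw [h2]
    exact Ideal.mul_mem_left _ _ (hXX hdim hI (he i))
  have hakq₂I : (MvPolynomial.X (a k) : MvPolynomial (Fin N) K) * q₂ ∈ I := by
    have h2 : (MvPolynomial.X (a k) : MvPolynomial (Fin N) K) * q₂
        = (∏ i' ∈ (Finset.univ.erase k).erase l, MvPolynomial.X (a i')) *
          (MvPolynomial.X (a k) * MvPolynomial.X (b k)) := by
      rw [hq₂]; ring
    rw [h2]
    exact Ideal.mul_mem_left _ _ (hXX hdim hI (he k))
  have hblq₂I : (MvPolynomial.X (b l) : MvPolynomial (Fin N) K) * q₂ ∈ I := by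
    have h2 : (MvPolynomial.X (b l) : MvPolynomial (Fin N) K) * q₂
        = (∏ i' ∈ (Finset.univ.erase k).erase l, MvPolynomial.X (a i')) *
          (MvPolynomial.X (b k) * MvPolynomial.X (b l)) := by
      rw [hq₂]; ring
    rw [h2]
    exact Ideal.mul_mem_left _ _ (hXX hdim hI hedge)
  -- the preimage
  refine LinearMap.mem_range.mpr
    ⟨(fun s => if s = T₁ then ((-1 : ℤ) ^ e₁) • Ideal.Quotient.mk I q₁ else 0)
      + (fun s => if s = T₂ then c₂ • Ideal.Quotient.mk I q₂ else 0), ?_⟩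
  rw [map_add]
  funext s
  rw [Pi.add_apply, kd_indicator, kd_indicator, hzfun s]
  by_cases hs : s = S
  · -- s = S : first sum gives mk P, second sum empty
    rw [hs, if_pos rfl]
    have hfil2 : Sᶜ.filter (fun j => insert j S = T₂) = ∅ := by
      rw [Finset.filter_eq_empty_iff]
      intro j _
      intro hins
      exact hbkT₂ (hins ▸ Finset.mem_insert_of_mem hbkS)
    rw [filter_insert_eq_singleton T₁ S (a k) hakS rfl, Finset.sum_singleton,
      hfil2, Finset.sum_empty, add_zero, double_sign_smul, hsmul, hXq₁]
  · by_cases hs1 : s = S₁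
    · -- s = S₁ : the two terms cancel
      rw [hs1, if_neg hS₁ne]
      have hins1 : insert (b k) S₁ = T₁ := by
        rw [hS₁, hT₁, Finset.insert_comm, Finset.insert_erase hbkS]
      have hins2 : insert (a l) S₁ = T₂ := rfl
      rw [filter_insert_eq_singleton T₁ S₁ (b k) hbkS₁ hins1,
        filter_insert_eq_singleton T₂ S₁ (a l) halS₁ hins2,
        Finset.sum_singleton, Finset.sum_singleton]
      have ht1 : ((-1 : ℤ) ^ f₁) • ((MvPolynomial.X (b k) : MvPolynomial (Fin N) K) •
          (((-1 : ℤ) ^ e₁) • Ideal.Quotient.mk I q₁))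
          = ((-1 : ℤ) ^ f₁ * (-1 : ℤ) ^ e₁) • Ideal.Quotient.mk I
              (MvPolynomial.X (b k) * q₁) := by
        rw [smul_comm ((MvPolynomial.X (b k) : MvPolynomial (Fin N) K)), hsmul, smul_smul]
      have ht2 : ((-1 : ℤ) ^ f₂) • ((MvPolynomial.X (a l) : MvPolynomial (Fin N) K) •
          (c₂ • Ideal.Quotient.mk I q₂))
          = ((-1 : ℤ) ^ f₂ * c₂) • Ideal.Quotient.mk I
              (MvPolynomial.X (b k) * q₁) := by
        rw [smul_comm ((MvPolynomial.X (a l) : MvPolynomial (Fin N) K)), hsmul, smul_smul, hXq₂]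
      rw [ht1, ht2, ← add_smul]
      have hcoef : (-1 : ℤ) ^ f₁ * (-1 : ℤ) ^ e₁ + (-1 : ℤ) ^ f₂ * c₂ = 0 := by
        have h22 : (-1 : ℤ) ^ f₂ * (-1 : ℤ) ^ f₂ = 1 := by
          rw [← pow_add]
          exact Even.neg_one_pow ⟨f₂, rfl⟩
        rw [hc₂]
        linear_combination (-((-1 : ℤ) ^ f₁ * (-1 : ℤ) ^ e₁)) * h22
      rw [hcoef, zero_smul]
    · -- other s : all terms vanish
      rw [if_neg hs]
      have hz1 : ∀ j ∈ sᶜ.filter (fun j => insert j s = T₁),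
          ((-1 : ℤ) ^ ((s.filter (· < j)).card)) •
            ((MvPolynomial.X j : MvPolynomial (Fin N) K) •
              (((-1 : ℤ) ^ e₁) • Ideal.Quotient.mk I q₁)) = 0 := by
        intro j hj
        obtain ⟨hjc, hjT⟩ := Finset.mem_filter.mp hj
        have hjs : j ∉ s := Finset.mem_compl.mp hjc
        have hjmem : j ∈ T₁ := hjT ▸ Finset.mem_insert_self j s
        have hsj : s = T₁.erase j := by rw [← hjT, Finset.erase_insert hjs]
        rcases Finset.mem_insert.mp hjmem with hja | hjS
        · exfalso
          apply hs
          rw [hsj, hja, hT₁, Finset.erase_insert hakS]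
        · obtain ⟨i, -, rfl⟩ := Finset.mem_image.mp hjS
          by_cases hik : i = k
          · exfalso
            apply hs1
            rw [hsj, hik, hT₁, Finset.erase_insert_of_ne hbknak.symm, ← hS₁]
          · have hmem := hq₁I i hik
            have h3 : (MvPolynomial.X (b i) : MvPolynomial (Fin N) K) •
                (((-1 : ℤ) ^ e₁) • Ideal.Quotient.mk I q₁) = 0 := by
              rw [smul_comm, hsmul, Ideal.Quotient.eq_zero_iff_mem.mpr hmem, smul_zero]
            rw [h3, smul_zero]
      have hz2 : ∀ j ∈ sᶜ.filter (fun j => insert j s = T₂),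
          ((-1 : ℤ) ^ ((s.filter (· < j)).card)) •
            ((MvPolynomial.X j : MvPolynomial (Fin N) K) •
              (c₂ • Ideal.Quotient.mk I q₂)) = 0 := by
        intro j hj
        obtain ⟨hjc, hjT⟩ := Finset.mem_filter.mp hj
        have hjs : j ∉ s := Finset.mem_compl.mp hjc
        have hjmem : j ∈ T₂ := hjT ▸ Finset.mem_insert_self j s
        have hsj : s = T₂.erase j := by rw [← hjT, Finset.erase_insert hjs]
        have hkill : (MvPolynomial.X j : MvPolynomial (Fin N) K) * q₂ ∈ I := by
          rcases Finset.mem_insert.mp hjmem with hja | hjS₁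
          · exfalso
            apply hs1
            rw [hsj, hja, hT₂, Finset.erase_insert halS₁]
          · rcases Finset.mem_insert.mp (by rw [hS₁] at hjS₁; exact hjS₁) with hjak | hjS'
            · rw [hjak]
              exact hakq₂I
            · obtain ⟨hjne, hjS''⟩ := Finset.mem_erase.mp hjS'
              obtain ⟨i, -, rfl⟩ := Finset.mem_image.mp hjS''
              have hik : i ≠ k := fun h => hjne (h ▸ rfl)
              by_cases hil : i = l
              · rw [hil]
                exact hblq₂I
              · exact hq₂I i hik hil
        have h3 : (MvPolynomial.X j : MvPolynomial (Fin N) K) •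
            (c₂ • Ideal.Quotient.mk I q₂) = 0 := by
          rw [smul_comm, hsmul, Ideal.Quotient.eq_zero_iff_mem.mpr hkill, smul_zero]
        rw [h3, smul_zero]
      rw [Finset.sum_eq_zero hz1, Finset.sum_eq_zero hz2, add_zero]

end ConverseB
section Glue

open MvPolynomial Finset

set_option maxHeartbeats 1000000 in
theorem viol_mem_Bd (K : Type) [Field K] (N : ℕ) (Δ : Finset (Finset (Fin N)))
    (m : ℕ) (a b : Fin m → Fin N)
    (hdim : ∀ F ∈ Δ, F.card = 2)
    (he : ∀ k, ({a k, b k} : Finset (Fin N)) ∈ Δ)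
    (I : Ideal (MvPolynomial (Fin N) K))
    (hI : I = Ideal.span ((fun F => ∏ v ∈ F, (MvPolynomial.X v : MvPolynomial (Fin N) K)) '' ↑Δ))
    (k l : Fin m) (hklne : k ≠ l)
    (hviol : ¬ Disconnected Δ ({a k, b k} : Finset (Fin N)) ({a l, b l} : Finset (Fin N)))
    (z : Finset (Fin N) → MvPolynomial (Fin N) K ⧸ I)
    (hz : z = if Function.Injective b then
        (fun s => if s = Finset.image b Finset.univ then
          Ideal.Quotient.mk I (∏ k, MvPolynomial.X (a k)) else 0)
      else 0) :
    z ∈ Bd K N (MvPolynomial (Fin N) K ⧸ I) := by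
  classical
  by_cases hbinj : Function.Injective b
  swap
  · rw [hz, if_neg hbinj]
    exact Submodule.zero_mem _
  rw [hz, if_pos hbinj]
  by_cases hP : (∏ i, MvPolynomial.X (a i) : MvPolynomial (Fin N) K) ∈ I
  · have hzero : (fun s => if s = Finset.image b Finset.univ then
        Ideal.Quotient.mk I (∏ k, MvPolynomial.X (a k)) else 0)
        = (0 : Finset (Fin N) → MvPolynomial (Fin N) K ⧸ I) := by
      funext s
      by_cases h : s = Finset.image b Finset.univ
      · simp [h, Ideal.Quotient.eq_zero_iff_mem.mpr hP]
      · simp [h]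
    rw [hzero]
    exact Submodule.zero_mem _
  have hPdvd : ∀ i r : Fin m, i ≠ r →
      ((MvPolynomial.X (a i) : MvPolynomial (Fin N) K) * MvPolynomial.X (a r)) ∈ I → False := by
    intro i r hir hmem
    apply hP
    have h2 : (∏ i', MvPolynomial.X (a i') : MvPolynomial (Fin N) K)
        = (∏ i' ∈ (Finset.univ.erase i).erase r, MvPolynomial.X (a i')) *
          (MvPolynomial.X (a i) * MvPolynomial.X (a r)) := by
      rw [← Finset.mul_prod_erase Finset.univ (fun i' => MvPolynomial.X (a i'))
          (Finset.mem_univ i),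
        ← Finset.mul_prod_erase _ (fun i' => MvPolynomial.X (a i'))
          (Finset.mem_erase.mpr ⟨(fun h => hir h.symm), Finset.mem_univ r⟩)]
      ring
    rw [h2]
    exact Ideal.mul_mem_left _ _ hmem
  have hanotS : ∀ i, a i ∉ Finset.image b Finset.univ := by
    intro i hiS
    obtain ⟨r, -, hbr⟩ := Finset.mem_image.mp hiS
    have hri : r ≠ i := by
      intro h
      exact (edge_ne hdim (he i)) (by rw [← hbr, h])
    apply hPdvd r i (fun h => hri h)
    rw [← hbr]
    exact hXX hdim hI (he r)
  by_cases haa : ∃ k' l' : Fin m, k' ≠ l' ∧ a k' = a l'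
  · obtain ⟨k', l', hk'l', ha'⟩ := haa
    refine conA K N Δ m a b hdim he I hI hanotS k' ?_ _ (fun s => rfl)
    have hlmem : l' ∈ Finset.univ.erase k' :=
      Finset.mem_erase.mpr ⟨(fun h => hk'l' h.symm), Finset.mem_univ l'⟩
    have h2 : (MvPolynomial.X (b k') : MvPolynomial (Fin N) K) *
        ∏ i ∈ Finset.univ.erase k', MvPolynomial.X (a i)
        = (∏ i ∈ (Finset.univ.erase k').erase l', MvPolynomial.X (a i)) *
          (MvPolynomial.X (a k') * MvPolynomial.X (b k')) := by
      rw [← Finset.mul_prod_erase _ (fun i => MvPolynomial.X (a i)) hlmem, ha']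
      ring
    rw [h2]
    exact Ideal.mul_mem_left _ _ (hXX hdim hI (he k'))
  · push_neg at haa
    rw [Disconnected, not_and_or] at hviol
    rcases hviol with hint | hcross
    · exfalso
      obtain ⟨x, hx⟩ := Finset.nonempty_iff_ne_empty.mpr hint
      obtain ⟨hx1, hx2⟩ := Finset.mem_inter.mp hx
      rcases Finset.mem_insert.mp hx1 with h1 | h1 <;>
        rcases Finset.mem_insert.mp hx2 with h2 | h2
      · exact haa k l hklne (h1.symm.trans h2)
      · rw [Finset.mem_singleton] at h2
        exact hanotS k (Finset.mem_image.mpr ⟨l, Finset.mem_univ l, by rw [← h2]; exact h1⟩)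
      · rw [Finset.mem_singleton] at h1
        exact hanotS l (Finset.mem_image.mpr ⟨k, Finset.mem_univ k, by rw [← h1]; exact h2⟩)
      · rw [Finset.mem_singleton] at h1 h2
        exact hklne (hbinj (by rw [← h1]; exact h2))
    · push_neg at hcross
      obtain ⟨x, hx, y, hy, hxy⟩ := hcross
      have hcase_ab : ∀ k' l' : Fin m, k' ≠ l' →
          ({a k', b l'} : Finset (Fin N)) ∈ Δ →
          (fun s => if s = Finset.image b Finset.univ then
            Ideal.Quotient.mk I (∏ k, MvPolynomial.X (a k)) else 0)
            ∈ Bd K N (MvPolynomial (Fin N) K ⧸ I) := by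
        intro k' l' hk'l' hmem
        refine conA K N Δ m a b hdim he I hI hanotS l' ?_ _ (fun s => rfl)
        have hkmem : k' ∈ Finset.univ.erase l' :=
          Finset.mem_erase.mpr ⟨hk'l', Finset.mem_univ k'⟩
        have h2 : (MvPolynomial.X (b l') : MvPolynomial (Fin N) K) *
            ∏ i ∈ Finset.univ.erase l', MvPolynomial.X (a i)
            = (∏ i ∈ (Finset.univ.erase l').erase k', MvPolynomial.X (a i)) *
              (MvPolynomial.X (a k') * MvPolynomial.X (b l')) := by
          rw [← Finset.mul_prod_erase _ (fun i => MvPolynomial.X (a i)) hkmem]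
          ring
        rw [h2]
        exact Ideal.mul_mem_left _ _ (hXX hdim hI hmem)
      rcases Finset.mem_insert.mp hx with rfl | hx'
      · rcases Finset.mem_insert.mp hy with rfl | hy'
        · exact absurd (hXX hdim hI hxy) (fun h => hPdvd k l hklne h)
        · rw [Finset.mem_singleton] at hy'
          subst hy'
          exact hcase_ab k l hklne hxy
      · rw [Finset.mem_singleton] at hx'
        subst hx'
        rcases Finset.mem_insert.mp hy with rfl | hy'
        · rw [Finset.pair_comm] at hxy
          exact hcase_ab l k (fun h => hklne h.symm) hxy
        · rw [Finset.mem_singleton] at hy'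
          subst hy'
          exact conB K N Δ m a b hdim he I hI hbinj hanotS k l hklne (haa k l hklne) hxy _
            (fun s => rfl)

end Glue
open scoped Classical in
/-- Corollary 2.14. Let `Δ` be a 1-dimensional forest with edge ideal
`I` and let `{x_{a k}, x_{b k}}`, `k = 1,…,m`, be edges of `Δ`. The product of the Koszul
homology classes `[x_{a 1} e_{b 1}] ⋯ [x_{a m} e_{b m}]` is nonzero in `H_•(R/I)` iff the
edges are pairwise disconnected. (The product of these classes is, up to sign, the class of
the monomial cycle `z = (∏_k x_{a k}) e_{{b 1,…,b m}}` when the `b k` are distinct, and is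
`0` otherwise; so nonvanishing of the product means that `z` is a cycle which is not a
boundary.) -/
theorem stmt13 (K : Type) [Field K] (N : ℕ) (Δ : Finset (Finset (Fin N)))
    (hforest : IsForest Δ) (hdim : ∀ F ∈ Δ, F.card = 2)
    (m : ℕ) (a b : Fin m → Fin N) (he : ∀ k, ({a k, b k} : Finset (Fin N)) ∈ Δ)
    (I : Ideal (MvPolynomial (Fin N) K))
    (hI : I = Ideal.span ((fun F => ∏ v ∈ F, (MvPolynomial.X v : MvPolynomial (Fin N) K)) '' ↑Δ))
    (z : Finset (Fin N) → MvPolynomial (Fin N) K ⧸ I)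
    (hz : z = if Function.Injective b then
        (fun s => if s = Finset.image b Finset.univ then
          Ideal.Quotient.mk I (∏ k, MvPolynomial.X (a k)) else 0)
      else 0) :
    (z ∈ ZB K N (MvPolynomial (Fin N) K ⧸ I) ∧ z ∉ Bd K N (MvPolynomial (Fin N) K ⧸ I)) ↔
      (∀ k l, k ≠ l → Disconnected Δ ({a k, b k} : Finset (Fin N)) {a l, b l}) := by
  classical
  constructor
  · intro hLHS
    by_contra hnd
    push_neg at hnd
    obtain ⟨k, l, hklne, hviol⟩ := hnd
    exact hLHS.2 (viol_mem_Bd K N Δ m a b hdim he I hI k l hklne hviol z hz)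
  · intro hdisc
    have hbinj : Function.Injective b := by
      intro k l h
      by_contra hne
      have h1 := (hdisc k l hne).1
      have h2 : b k ∈ ({a k, b k} : Finset (Fin N)) ∩ {a l, b l} :=
        Finset.mem_inter.mpr ⟨by simp, by simp [h]⟩
      rw [h1] at h2
      exact absurd h2 (Finset.notMem_empty _)
    rw [hz, if_pos hbinj]
    exact ⟨fwd_mem_ZB K N Δ m a b hdim he I hI _ (fun s => rfl),
      fwd_not_mem_Bd K N Δ m a b hdim he I hI hdisc _ (fun s => rfl)⟩
end

section
/- Let Δ be a d-dimensional pure tree connected in codimension 1, V the set of faces of dimension d-1, and for G ∈ V let deg(G) be the number of facets containing G. Then the number of facets of Δ minus 1 equals (Σ_{G∈V} deg(G)) − |V|. -/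
variable {V : Type} [DecidableEq V]

/-- A walk in the "codimension-1" adjacency graph (allowing repeated vertices /
stationary steps). -/
def Walk (Δ : Finset (Finset V)) (d : ℕ) (c : ℕ → Finset V) (n : ℕ) : Prop :=
  (∀ i ≤ n, c i ∈ Δ) ∧ ∀ i < n, c i = c (i + 1) ∨ (c i ∩ c (i + 1)).card = d

lemma key_card (d : ℕ) : ∀ (n : ℕ) (Δ : Finset (Finset V)), Δ.card = n →
    IsComplex Δ → IsPure Δ d → HasLeafProp Δ → Δ.Nonempty →
    (∀ F ∈ Δ, ∀ G ∈ Δ, ∃ m c, Walk Δ d c m ∧ c 0 = F ∧ c m = G) →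
    (Δ.biUnion fun F => F.powersetCard d).card = d * Δ.card + 1 := by
  intro n
  induction n using Nat.strong_induction_on with
  | _ n ih =>
    intro Δ hn hcx hpure hleaf hne hconn
    rcases Nat.lt_or_ge n 2 with hlt | hge
    · -- base case : n = 1
      interval_cases n
      · simp [Finset.card_eq_zero.mp hn] at hne
      · obtain ⟨F, hF⟩ := Finset.card_eq_one.mp hn
        subst hF
        simp [Finset.card_powersetCard, hpure F (by simp),
          Nat.choose_succ_self_right]
    · -- inductive step : n ≥ 2
      obtain ⟨F, hFΔ, hF2⟩ := hleaf Δ subset_rfl hne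
      have hΔne : Δ ≠ {F} := by
        intro h; rw [h] at hn; simp at hn; omega
      obtain ⟨G, hGΔ, hGF, hbr⟩ := hF2.resolve_left hΔne
      -- F has a codim-1 neighbor, hence (F ∩ G).card = d
      have hFGd : (F ∩ G).card = d := by
        obtain ⟨m, c, ⟨hmem, hstep⟩, hc0, hcm⟩ := hconn F hFΔ G hGΔ
        have hEx : ∃ i, i ≤ m ∧ c i ≠ F := ⟨m, le_rfl, by rw [hcm]; exact hGF⟩
        classical
        set k := Nat.find hEx with hk
        obtain ⟨hkm, hckF⟩ := Nat.find_spec hEx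
        have hk0 : k ≠ 0 := by
          intro h; apply hckF; rw [← hk, h]; exact hc0
        have hpred : c (k - 1) = F := by
          by_contra h
          exact Nat.find_min hEx (Nat.sub_lt (Nat.pos_of_ne_zero hk0) one_pos)
            ⟨by omega, h⟩
        have hstep' := hstep (k - 1) (by omega)
        rw [Nat.sub_add_cancel (Nat.pos_of_ne_zero hk0), hpred] at hstep'
        rcases hstep' with h | h
        · exact absurd h.symm hckF
        · -- (F ∩ c k).card = d, and F ∩ c k ⊆ F ∩ G
          have hsub : F ∩ c k ⊆ F ∩ G := hbr (c k) (hmem k hkm) hckF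
          have hge' : d ≤ (F ∩ G).card := h ▸ Finset.card_le_card hsub
          have hne' : F ∩ G ≠ F := by
            intro hEq
            exact hGF (hcx.2 F hFΔ G hGΔ (by
              rw [← hEq]; exact Finset.inter_subset_right)).symm |>.elim
          have hle' : (F ∩ G).card ≤ d := by
            by_contra hlt'
            push_neg at hlt'
            apply hne'
            apply Finset.eq_of_subset_of_card_le Finset.inter_subset_left
            rw [hpure F hFΔ]; omega
          omega
      -- the sub-lemma used for rerouting walks around F
      have reroute : ∀ H ∈ Δ, H ≠ F → (F ∩ H).card = d →
          H = G ∨ (G ∩ H).card = d := by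
        intro H hHΔ hHF hcard
        have hsub : F ∩ H ⊆ F ∩ G := hbr H hHΔ hHF
        have hEq : F ∩ H = F ∩ G := Finset.eq_of_subset_of_card_le hsub
          (by omega)
        by_cases hGH : H = G
        · exact Or.inl hGH
        · right
          have hsub2 : F ∩ G ⊆ G ∩ H := Finset.subset_inter
            Finset.inter_subset_right
            (by rw [← hEq]; exact Finset.inter_subset_right)
          have hge2 : d ≤ (G ∩ H).card := hFGd ▸ Finset.card_le_card hsub2
          have hle2 : (G ∩ H).card ≤ d := by
            by_contra hlt'
            push_neg at hlt'
            have : G ∩ H = G := Finset.eq_of_subset_of_card_le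
              Finset.inter_subset_left (by rw [hpure G hGΔ]; omega)
            exact hGH ((hcx.2 G hGΔ H hHΔ (by
              rw [← this]; exact Finset.inter_subset_right)).symm) |>.elim
          omega
      set Δ' := Δ.erase F with hΔ'
      have hGΔ' : G ∈ Δ' := Finset.mem_erase.mpr ⟨hGF, hGΔ⟩
      have hsubΔ : Δ' ⊆ Δ := Finset.erase_subset F Δ
      have hcard' : Δ'.card = n - 1 := by
        rw [hΔ', Finset.card_erase_of_mem hFΔ, hn]
      -- walks in Δ' : replace every F in a Δ-walk by G
      have hconn' : ∀ X ∈ Δ', ∀ Y ∈ Δ', ∃ m c, Walk Δ' d c m ∧ c 0 = X ∧ c m = Y := by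
        intro X hX Y hY
        obtain ⟨hXF, hXΔ⟩ := Finset.mem_erase.mp hX
        obtain ⟨hYF, hYΔ⟩ := Finset.mem_erase.mp hY
        obtain ⟨m, c, ⟨hmem, hstep⟩, hc0, hcm⟩ := hconn X hXΔ Y hYΔ
        classical
        refine ⟨m, fun i => if c i = F then G else c i, ⟨?_, ?_⟩, ?_, ?_⟩
        · intro i hi
          by_cases h : c i = F
          · simp [h, hGΔ']
          · simp [h]; exact Finset.mem_erase.mpr ⟨h, hmem i hi⟩
        · intro i hi
          rcases hstep i hi with h | h
          · left; simp [h]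
          · by_cases h1 : c i = F
            · by_cases h2 : c (i + 1) = F
              · left; simp [h1, h2]
              · simp only [h1, if_pos rfl, if_neg h2]
                rw [h1] at h
                rcases reroute (c (i + 1)) (hmem (i + 1) hi) h2 h with hh | hh
                · left; exact hh.symm
                · right; exact hh
            · by_cases h2 : c (i + 1) = F
              · simp only [if_neg h1, h2, if_pos rfl]
                rw [h2, Finset.inter_comm] at h
                rcases reroute (c i) (hmem i (le_of_lt hi)) h1 h with hh | hh
                · left; exact hh
                · right; rw [Finset.inter_comm]; exact hh
              · simp only [if_neg h1, if_neg h2]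
                right; exact h
        · simp [hc0, hXF]
        · simp [hcm, hYF]
      have hIH := ih (n - 1) (by omega) Δ' hcard'
        ⟨fun H hH => hcx.1 H (hsubΔ hH),
         fun A hA B hB => hcx.2 A (hsubΔ hA) B (hsubΔ hB)⟩
        (fun H hH => hpure H (hsubΔ hH))
        (fun Γ hΓ => hleaf Γ (hΓ.trans hsubΔ))
        ⟨G, hGΔ'⟩ hconn'
      -- counting
      have hins : Δ = insert F Δ' := (Finset.insert_erase hFΔ).symm
      have hFnot : F ∉ Δ' := Finset.notMem_erase F Δ
      have hbi : Δ.biUnion (fun F => F.powersetCard d)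
          = F.powersetCard d ∪ Δ'.biUnion (fun F => F.powersetCard d) := by
        conv_lhs => rw [hins]
        exact Finset.biUnion_insert
      have hinter : F.powersetCard d ∩ Δ'.biUnion (fun F => F.powersetCard d)
          = {F ∩ G} := by
        apply Finset.Subset.antisymm
        · intro S hS
          obtain ⟨hS1, hS2⟩ := Finset.mem_inter.mp hS
          obtain ⟨hSF, hScard⟩ := Finset.mem_powersetCard.mp hS1
          obtain ⟨H, hHΔ', hSH⟩ := Finset.mem_biUnion.mp hS2
          obtain ⟨hSH', _⟩ := Finset.mem_powersetCard.mp hSH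
          obtain ⟨hHF, hHΔ⟩ := Finset.mem_erase.mp hHΔ'
          have hsub : S ⊆ F ∩ G := (Finset.subset_inter hSF hSH').trans
            (hbr H hHΔ hHF)
          have : S = F ∩ G := Finset.eq_of_subset_of_card_le hsub (by omega)
          simp [this]
        · intro S hS
          rw [Finset.mem_singleton] at hS
          subst hS
          refine Finset.mem_inter.mpr ⟨?_, ?_⟩
          · exact Finset.mem_powersetCard.mpr ⟨Finset.inter_subset_left, hFGd⟩
          · exact Finset.mem_biUnion.mpr ⟨G, hGΔ',
              Finset.mem_powersetCard.mpr ⟨Finset.inter_subset_right, hFGd⟩⟩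
      have hunion := Finset.card_union_add_card_inter (F.powersetCard d)
        (Δ'.biUnion (fun F => F.powersetCard d))
      rw [hinter, Finset.card_singleton] at hunion
      have hpF : (F.powersetCard d).card = d + 1 := by
        rw [Finset.card_powersetCard, hpure F hFΔ, Nat.choose_succ_self_right]
      rw [hbi, hn]
      rw [hcard'] at hIH
      have hmul : d * n = d * (n - 1) + d := by
        have h1 : n - 1 + 1 = n := by omega
        calc d * n = d * (n - 1 + 1) := by rw [h1]
          _ = d * (n - 1) + d := by ring
      omega

/-- Lemma 3.5. For a `d`-dimensional pure tree connected in codimension 1,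
with `V` the set of `(d-1)`-dimensional faces (the `d`-element subsets of facets) and
`deg G` the number of facets containing `G`: `|F(Δ)| - 1 = (Σ_{G ∈ V} deg G) - |V|`. -/
theorem stmt17 {V : Type} [DecidableEq V] (Δ : Finset (Finset V)) (hΔ : IsComplex Δ)
    (d : ℕ) (hpure : IsPure Δ d) (htree : IsTree Δ) (hcc : ConnCodim1 Δ) :
    (Δ.card : ℤ) - 1 =
      (∑ G ∈ Δ.biUnion fun F => F.powersetCard d, ((Δ.filter fun F => G ⊆ F).card : ℤ))
        - ((Δ.biUnion fun F => F.powersetCard d).card : ℤ) := by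
  classical
  obtain ⟨hne, hconn, hleaf⟩ := htree
  -- connectivity in codimension 1 gives walks
  have hwalk : ∀ F ∈ Δ, ∀ G ∈ Δ, ∃ m c, Walk Δ d c m ∧ c 0 = F ∧ c m = G := by
    intro F hF G hG
    obtain ⟨m, c, ⟨⟨hmem, _⟩, _, hprop⟩, hc0, hcm⟩ := hcc F hF G hG
      (by rw [hpure F hF, hpure G hG])
    refine ⟨m, c, ⟨hmem, fun i hi => Or.inr ?_⟩, hc0, hcm⟩
    have := hprop i hi
    have := hpure (c (i + 1)) (hmem (i + 1) hi)
    omega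
  have hV : (Δ.biUnion fun F => F.powersetCard d).card = d * Δ.card + 1 :=
    key_card d Δ.card Δ rfl hΔ hpure hleaf hne hwalk
  -- the degree sum is (d+1) * |Δ| by double counting
  have hdeg : ∑ G ∈ Δ.biUnion fun F => F.powersetCard d,
      (Δ.filter fun F => G ⊆ F).card = (d + 1) * Δ.card := by
    have h1 : ∀ G, (Δ.filter fun F => G ⊆ F).card
        = ∑ F ∈ Δ, if G ⊆ F then 1 else 0 := fun G => Finset.card_filter _ _
    simp_rw [h1]
    rw [Finset.sum_comm]
    have h2 : ∀ F ∈ Δ, (∑ G ∈ Δ.biUnion fun F => F.powersetCard d,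
        if G ⊆ F then 1 else 0) = d + 1 := by
      intro F hF
      rw [← Finset.card_filter]
      have : (Δ.biUnion fun F => F.powersetCard d).filter (fun G => G ⊆ F)
          = F.powersetCard d := by
        apply Finset.Subset.antisymm
        · intro S hS
          obtain ⟨hS1, hS2⟩ := Finset.mem_filter.mp hS
          obtain ⟨H, _, hSH⟩ := Finset.mem_biUnion.mp hS1
          exact Finset.mem_powersetCard.mpr
            ⟨hS2, (Finset.mem_powersetCard.mp hSH).2⟩
        · intro S hS
          exact Finset.mem_filter.mpr
            ⟨Finset.mem_biUnion.mpr ⟨F, hF, hS⟩, (Finset.mem_powersetCard.mp hS).1⟩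
      rw [this, Finset.card_powersetCard, hpure F hF, Nat.choose_succ_self_right]
    rw [Finset.sum_congr rfl h2, Finset.sum_const, smul_eq_mul, mul_comm]
  have hdeg' : ∑ G ∈ Δ.biUnion fun F => F.powersetCard d,
      ((Δ.filter fun F => G ⊆ F).card : ℤ) = ((d + 1) * Δ.card : ℕ) := by
    rw [← hdeg]; push_cast; ring
  rw [hdeg', hV]
  push_cast
  ring
end
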